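/- (Corollary: summed memory lens quantities lower-bound log memory capacity.) Fix a horizon H and a time t ≤ H. Let Z_1, …, Z_{t-1}, X_t, A_t be random variables on a common probability space, each taking values in a finite set, and suppose there exist K ∈ ℕ, a memory function g : {1,…,H} × 𝒵 × {1,…,K} → {1,…,K}, and memory states Y_0 = 1, Y_j = g(j, Z_j, Y_{j-1}) for 1 ≤ j ≤ t−1, such that the conditional distribution of A_t given (X_t, Z_{1:t-1}) coincides almost surely with that of A_t given (X_t, Y_{t-1}). Then ∑_{i=1}^{t-1} I(A_t; Z_i | X_t, Z_{i+1:t-1}) ≤ log K, where Z_{i+1:t-1} is the empty tuple when i = t−1. -/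

import Mathlib

open MeasureTheory ProbabilityTheory Real BigOperators

namespace MemoryLens

/-- Probability of an event as a real number. -/
noncomputable def pr {Ω : Type*} [MeasurableSpace Ω] (μ : Measure Ω) (s : Set Ω) : ℝ :=
  (μ s).toReal

/-- Conditional probability `P(s | t)` as a real number. -/
noncomputable def condProb {Ω : Type*} [MeasurableSpace Ω] (μ : Measure Ω) (s t : Set Ω) : ℝ :=
  pr μ (s ∩ t) / pr μ t

/-- Shannon entropy (in nats) of a finite-valued random variable. -/
noncomputable def entropy {Ω S : Type*} [MeasurableSpace Ω] [Fintype S]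
    (μ : Measure Ω) (X : Ω → S) : ℝ :=
  ∑ x : S, Real.negMulLog (pr μ {ω | X ω = x})

/-- Conditional entropy `H(X | W)` of finite-valued random variables. -/
noncomputable def condEntropy {Ω S T : Type*} [MeasurableSpace Ω] [Fintype S] [Fintype T]
    (μ : Measure Ω) (X : Ω → S) (W : Ω → T) : ℝ :=
  entropy μ (fun ω => (X ω, W ω)) - entropy μ W

/-- Conditional mutual information `I(A ; B | W)` of finite-valued random variables,
defined via the standard entropy decomposition. -/
noncomputable def condMI {Ω α β γ : Type*} [MeasurableSpace Ω] [Fintype α] [Fintype β] [Fintype γ]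
    (μ : Measure Ω) (A : Ω → α) (B : Ω → β) (W : Ω → γ) : ℝ :=
  entropy μ (fun ω => (A ω, W ω)) + entropy μ (fun ω => (B ω, W ω))
    - entropy μ (fun ω => (A ω, B ω, W ω)) - entropy μ W

/-- All fibers (level sets) of a random variable are measurable. -/
def MeasFibers {Ω α : Type*} [MeasurableSpace Ω] (A : Ω → α) : Prop :=
  ∀ a, MeasurableSet {ω | A ω = a}

/-- `memFold g y0 n (z_1, …, z_n)` is the memory state `Y_n` obtained by starting in `y0`
and applying the memory function `g` along observations `z_1, …, z_n`. -/
def memFold {𝒵 M : Type*} (g : ℕ → 𝒵 → M → M) (y0 : M) : (n : ℕ) → (Fin n → 𝒵) → M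
  | 0, _ => y0
  | n + 1, zs => g (n + 1) (zs (Fin.last n)) (memFold g y0 n (fun j => zs j.castSucc))

/-- The memory state `Y_n` as a random variable: the result of recursively updating the memory
via `g` along the observations `Z_1, …, Z_n`, starting from `Y_0 = y0`. -/
def memState {Ω 𝒵 M : Type*} (g : ℕ → 𝒵 → M → M) (Z : ℕ → Ω → 𝒵) (y0 : M) (n : ℕ) (ω : Ω) : M :=
  memFold g y0 n (fun j => Z (1 + (j : ℕ)) ω)

section Lemmas

variable {Ω : Type*} [MeasurableSpace Ω] (μ : Measure Ω) [IsProbabilityMeasure μ]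
set_option linter.unusedSectionVars false

lemma pr_nonneg (s : Set Ω) : 0 ≤ pr μ s := ENNReal.toReal_nonneg

lemma pr_empty : pr μ (∅ : Set Ω) = 0 := by simp [pr]

lemma pr_univ : pr μ (Set.univ : Set Ω) = 1 := by simp [pr]

lemma pr_mono {s t : Set Ω} (h : s ⊆ t) : pr μ s ≤ pr μ t :=
  ENNReal.toReal_mono (measure_ne_top μ t) (measure_mono h)

lemma pr_ne_zero_iff {s : Set Ω} : pr μ s ≠ 0 ↔ μ s ≠ 0 := by
  rw [pr, ENNReal.toReal_ne_zero]
  exact ⟨fun h => h.1, fun h => ⟨h, measure_ne_top μ s⟩⟩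

lemma pr_partition {β : Type*} [Fintype β] (B : Ω → β) (hB : MeasFibers B)
    (s : Set Ω) (hs : MeasurableSet s) :
    pr μ s = ∑ b : β, pr μ (s ∩ {ω | B ω = b}) := by
  have h1 : s = ⋃ b : β, s ∩ {ω | B ω = b} := by ext ω; simp
  have hd : Pairwise (Function.onFun Disjoint fun b : β => s ∩ {ω | B ω = b}) := by
    intro b b' hbb'
    simp only [Function.onFun, Set.disjoint_left]
    rintro ω ⟨_, hb⟩ ⟨_, hb'⟩
    exact hbb' (hb ▸ hb' ▸ rfl)
  conv_lhs => rw [pr, h1, measure_iUnion hd (fun b => hs.inter (hB b)), tsum_fintype,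
    ENNReal.toReal_sum (fun b _ => measure_ne_top μ _)]
  rfl

lemma entropy_comp_inj {S T : Type*} [Fintype S] [Fintype T]
    (X : Ω → S) (f : S → T) (hf : Function.Injective f) :
    entropy μ (fun ω => f (X ω)) = entropy μ X := by
  classical
  unfold entropy
  rw [← Finset.sum_subset (Finset.subset_univ (Finset.univ.image f))]
  · rw [Finset.sum_image (fun a _ b _ h => hf h)]
    refine Finset.sum_congr rfl fun x _ => ?_
    have : {ω | f (X ω) = f x} = {ω | X ω = x} := by ext ω; simp [hf.eq_iff]
    rw [this]
  · intro y _ hy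
    have : {ω | f (X ω) = y} = ∅ := by
      ext ω
      simp only [Set.mem_setOf_eq, Set.mem_empty_iff_false, iff_false]
      intro h
      exact hy (Finset.mem_image.mpr ⟨X ω, Finset.mem_univ _, h⟩)
    rw [this, pr_empty, Real.negMulLog_zero]

lemma sum_negMulLog_le {M : Type*} [Fintype M] [Nonempty M] (q : M → ℝ) (hq : ∀ y, 0 ≤ q y) :
    ∑ y, negMulLog (q y) ≤ negMulLog (∑ y, q y) + (∑ y, q y) * Real.log (Fintype.card M) := by
  have hn : (0 : ℝ) < (Fintype.card M : ℝ) := by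
    have := Fintype.card_pos (α := M); positivity
  set n : ℝ := (Fintype.card M : ℝ) with hndef
  have jensen := Real.concaveOn_negMulLog.le_map_sum (t := Finset.univ)
    (w := fun _ : M => 1 / n) (p := q) (fun _ _ => by positivity)
    (by rw [Finset.sum_const, Finset.card_univ, nsmul_eq_mul]; field_simp; rfl)
    (fun y _ => Set.mem_Ici.mpr (hq y))
  simp only [smul_eq_mul] at jensen
  have h1 : ∑ y : M, (1 / n) * q y = (∑ y, q y) * (1 / n) := by
    rw [← Finset.mul_sum, mul_comm]
  rw [h1, Real.negMulLog_mul] at jensen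
  have h2 : negMulLog (1 / n) = (1 / n) * Real.log n := by
    rw [Real.negMulLog, Real.log_div one_ne_zero (ne_of_gt hn), Real.log_one]
    ring
  rw [h2] at jensen
  have h3 : ∑ y : M, (1 / n) * negMulLog (q y) = (1 / n) * ∑ y, negMulLog (q y) := by
    rw [Finset.mul_sum]
  rw [h3] at jensen
  have hn' : n ≠ 0 := ne_of_gt hn
  have := mul_le_mul_of_nonneg_left jensen (le_of_lt hn)
  calc ∑ y, negMulLog (q y) = n * (1 / n * ∑ y : M, negMulLog (q y)) := by field_simp
    _ ≤ n * (1 / n * negMulLog (∑ y, q y) + (∑ y, q y) * (1 / n * Real.log n)) := this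
    _ = negMulLog (∑ y, q y) + (∑ y, q y) * Real.log n := by field_simp

lemma negMulLog_sum_le {M : Type*} [Fintype M] (q : M → ℝ) (hq : ∀ y, 0 ≤ q y) :
    negMulLog (∑ y, q y) ≤ ∑ y, negMulLog (q y) := by
  have hS : ∀ y, q y ≤ ∑ y, q y := fun y =>
    Finset.single_le_sum (fun i _ => hq i) (Finset.mem_univ y)
  have h1 : negMulLog (∑ y, q y) = ∑ y, (-(q y) * Real.log (∑ y, q y)) := by
    rw [Real.negMulLog, ← Finset.sum_neg_distrib, Finset.sum_mul]
  rw [h1]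
  refine Finset.sum_le_sum fun y _ => ?_
  rcases eq_or_lt_of_le (hq y) with h | h
  · simp [← h, Real.negMulLog]
  · have hlog : Real.log (q y) ≤ Real.log (∑ y, q y) := Real.log_le_log h (hS y)
    rw [Real.negMulLog]
    nlinarith [hlog, h]


lemma measFibers_pair {α β : Type*} {A : Ω → α} {B : Ω → β}
    (hA : MeasFibers A) (hB : MeasFibers B) : MeasFibers (fun ω => (A ω, B ω)) := by
  rintro ⟨a, b⟩
  have : {ω | (A ω, B ω) = (a, b)} = {ω | A ω = a} ∩ {ω | B ω = b} := by
    ext ω; simp [Prod.ext_iff]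
  rw [this]
  exact (hA a).inter (hB b)

lemma measFibers_comp {S T : Type*} [Fintype S] {X : Ω → S} (hX : MeasFibers X) (f : S → T) :
    MeasFibers (fun ω => f (X ω)) := by
  intro y
  have : {ω | f (X ω) = y} = ⋃ x : S, ⋃ (_ : f x = y), {ω | X ω = x} := by
    ext ω
    simp only [Set.mem_setOf_eq, Set.mem_iUnion]
    constructor
    · intro h; exact ⟨X ω, h, rfl⟩
    · rintro ⟨x, h, rfl⟩; exact h
  rw [this]
  exact MeasurableSet.iUnion fun x => MeasurableSet.iUnion fun _ => hX x

lemma pr_pair_marg {S T : Type*} [Fintype S] [Fintype T] (X : Ω → S) (Y : Ω → T)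
    (hX : MeasFibers X) (hY : MeasFibers Y) (x : S) :
    pr μ {ω | X ω = x} = ∑ y : T, pr μ {ω | (X ω, Y ω) = (x, y)} := by
  rw [pr_partition μ Y hY _ (hX x)]
  refine Finset.sum_congr rfl fun y _ => ?_
  congr 1
  ext ω; simp [Prod.ext_iff]

lemma sum_pr_fibers {S : Type*} [Fintype S] (X : Ω → S) (hX : MeasFibers X) :
    ∑ x : S, pr μ {ω | X ω = x} = 1 := by
  have := pr_partition μ X hX Set.univ MeasurableSet.univ
  rw [pr_univ] at this
  simp only [Set.univ_inter] at this
  rw [← this]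

lemma entropy_pair_le {S M : Type*} [Fintype S] [Fintype M] [Nonempty M]
    (X : Ω → S) (Y : Ω → M) (hX : MeasFibers X) (hY : MeasFibers Y) :
    entropy μ (fun ω => (X ω, Y ω)) ≤ entropy μ X + Real.log (Fintype.card M) := by
  unfold entropy
  rw [Fintype.sum_prod_type]
  have key : ∀ x : S, ∑ y : M, negMulLog (pr μ {ω | (X ω, Y ω) = (x, y)})
      ≤ negMulLog (pr μ {ω | X ω = x}) + pr μ {ω | X ω = x} * Real.log (Fintype.card M) := by
    intro x
    rw [pr_pair_marg μ X Y hX hY x]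
    exact sum_negMulLog_le _ (fun y => pr_nonneg μ _)
  calc ∑ x : S, ∑ y : M, negMulLog (pr μ {ω | (X ω, Y ω) = (x, y)})
      ≤ ∑ x : S, (negMulLog (pr μ {ω | X ω = x})
          + pr μ {ω | X ω = x} * Real.log (Fintype.card M)) :=
        Finset.sum_le_sum fun x _ => key x
    _ = (∑ x : S, negMulLog (pr μ {ω | X ω = x}))
          + (∑ x : S, pr μ {ω | X ω = x}) * Real.log (Fintype.card M) := by
        rw [Finset.sum_add_distrib, Finset.sum_mul]
    _ = (∑ x : S, negMulLog (pr μ {ω | X ω = x})) + Real.log (Fintype.card M) := by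
        rw [sum_pr_fibers μ X hX, one_mul]

lemma entropy_le_pair {S M : Type*} [Fintype S] [Fintype M]
    (X : Ω → S) (Y : Ω → M) (hX : MeasFibers X) (hY : MeasFibers Y) :
    entropy μ X ≤ entropy μ (fun ω => (X ω, Y ω)) := by
  unfold entropy
  rw [Fintype.sum_prod_type]
  refine Finset.sum_le_sum fun x _ => ?_
  rw [pr_pair_marg μ X Y hX hY x]
  exact negMulLog_sum_le _ (fun y => pr_nonneg μ _)


lemma cmi_zero_arith {α β δ : Type*} [Fintype α] [Fintype β] [Fintype δ]
    (p3 : α → β → δ → ℝ) (pAW : α → δ → ℝ) (pBW : β → δ → ℝ) (pW : δ → ℝ) (q : α → δ → ℝ)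
    (hm1 : ∀ a w, pAW a w = ∑ b, p3 a b w)
    (hm2 : ∀ b w, pBW b w = ∑ a, p3 a b w)
    (hm3 : ∀ w, pW w = ∑ b, pBW b w)
    (hfac : ∀ a b w, p3 a b w = q a w * pBW b w) :
    (∑ a, ∑ b, ∑ w, negMulLog (p3 a b w)) + ∑ w, negMulLog (pW w)
      = (∑ a, ∑ w, negMulLog (pAW a w)) + ∑ b, ∑ w, negMulLog (pBW b w) := by
  have s1 : ∀ b w, pBW b w ≠ 0 → ∑ a, q a w = 1 := by
    intro b w h
    have h2 : (∑ a, q a w) * pBW b w = 1 * pBW b w := by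
      rw [one_mul, Finset.sum_mul]
      conv_rhs => rw [hm2]
      exact Finset.sum_congr rfl fun a _ => (hfac a b w).symm
    exact mul_right_cancel₀ h h2
  have s2 : ∀ w, pW w ≠ 0 → ∑ a, q a w = 1 := by
    intro w h
    rw [hm3] at h
    obtain ⟨b, _, hb⟩ := Finset.exists_ne_zero_of_sum_ne_zero h
    exact s1 b w hb
  have qa : ∀ a w, pAW a w = q a w * pW w := by
    intro a w
    rw [hm1]
    simp_rw [hfac]
    rw [← Finset.mul_sum, ← hm3]
  have habsorbBW : ∀ b w, (∑ a, q a w) * negMulLog (pBW b w) = negMulLog (pBW b w) := by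
    intro b w
    rcases eq_or_ne (pBW b w) 0 with h | h
    · rw [h, Real.negMulLog_zero, mul_zero]
    · rw [s1 b w h, one_mul]
  have habsorbW : ∀ w, (∑ a, q a w) * negMulLog (pW w) = negMulLog (pW w) := by
    intro w
    rcases eq_or_ne (pW w) 0 with h | h
    · rw [h, Real.negMulLog_zero, mul_zero]
    · rw [s2 w h, one_mul]
  have hsumBW : ∀ w, ∑ b, pBW b w = pW w := fun w => (hm3 w).symm
  have T1 : ∑ a, ∑ b, ∑ w, pBW b w * negMulLog (q a w)
      = ∑ w, pW w * ∑ a, negMulLog (q a w) := by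
    calc ∑ a, ∑ b, ∑ w, pBW b w * negMulLog (q a w)
        = ∑ a, ∑ w, ∑ b, pBW b w * negMulLog (q a w) :=
          Finset.sum_congr rfl fun a _ => Finset.sum_comm
      _ = ∑ a, ∑ w, pW w * negMulLog (q a w) := by
          refine Finset.sum_congr rfl fun a _ => Finset.sum_congr rfl fun w _ => ?_
          rw [← Finset.sum_mul, hsumBW]
      _ = ∑ w, ∑ a, pW w * negMulLog (q a w) := Finset.sum_comm
      _ = ∑ w, pW w * ∑ a, negMulLog (q a w) :=
          Finset.sum_congr rfl fun w _ => (Finset.mul_sum _ _ _).symm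
  have T2 : ∑ a, ∑ b, ∑ w, q a w * negMulLog (pBW b w)
      = ∑ b, ∑ w, negMulLog (pBW b w) := by
    calc ∑ a, ∑ b, ∑ w, q a w * negMulLog (pBW b w)
        = ∑ b, ∑ a, ∑ w, q a w * negMulLog (pBW b w) := Finset.sum_comm
      _ = ∑ b, ∑ w, ∑ a, q a w * negMulLog (pBW b w) :=
          Finset.sum_congr rfl fun b _ => Finset.sum_comm
      _ = ∑ b, ∑ w, (∑ a, q a w) * negMulLog (pBW b w) :=
          Finset.sum_congr rfl fun b _ => Finset.sum_congr rfl fun w _ =>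
            (Finset.sum_mul _ _ _).symm
      _ = ∑ b, ∑ w, negMulLog (pBW b w) :=
          Finset.sum_congr rfl fun b _ => Finset.sum_congr rfl fun w _ => habsorbBW b w
  have key1 : (∑ a, ∑ b, ∑ w, negMulLog (p3 a b w))
      = (∑ w, pW w * ∑ a, negMulLog (q a w)) + ∑ b, ∑ w, negMulLog (pBW b w) := by
    have step : ∀ (a : α) (b : β) (w : δ), negMulLog (p3 a b w)
        = pBW b w * negMulLog (q a w) + q a w * negMulLog (pBW b w) := by
      intro a b w
      rw [hfac, Real.negMulLog_mul]
    simp_rw [step, Finset.sum_add_distrib]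
    rw [T1, T2]
  have key2 : (∑ a, ∑ w, negMulLog (pAW a w))
      = (∑ w, pW w * ∑ a, negMulLog (q a w)) + ∑ w, negMulLog (pW w) := by
    have step : ∀ (a : α) (w : δ), negMulLog (pAW a w)
        = pW w * negMulLog (q a w) + q a w * negMulLog (pW w) := by
      intro a w
      rw [qa, Real.negMulLog_mul]
    simp_rw [step, Finset.sum_add_distrib]
    congr 1
    · calc ∑ a, ∑ w, pW w * negMulLog (q a w)
          = ∑ w, ∑ a, pW w * negMulLog (q a w) := Finset.sum_comm
        _ = ∑ w, pW w * ∑ a, negMulLog (q a w) :=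
            Finset.sum_congr rfl fun w _ => (Finset.mul_sum _ _ _).symm
    · calc ∑ a, ∑ w, q a w * negMulLog (pW w)
          = ∑ w, ∑ a, q a w * negMulLog (pW w) := Finset.sum_comm
        _ = ∑ w, (∑ a, q a w) * negMulLog (pW w) :=
            Finset.sum_congr rfl fun w _ => (Finset.sum_mul _ _ _).symm
        _ = ∑ w, negMulLog (pW w) := Finset.sum_congr rfl fun w _ => habsorbW w
  rw [key1, key2]
  ring


lemma cmi_zero {α β δ : Type*} [Fintype α] [Fintype β] [Fintype δ]
    (A : Ω → α) (B : Ω → β) (W : Ω → δ)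
    (hA : MeasFibers A) (hB : MeasFibers B) (hW : MeasFibers W)
    (q : α → δ → ℝ)
    (hfac : ∀ a b w, pr μ {ω | A ω = a ∧ B ω = b ∧ W ω = w}
        = q a w * pr μ {ω | B ω = b ∧ W ω = w}) :
    entropy μ (fun ω => (A ω, B ω, W ω)) + entropy μ W
      = entropy μ (fun ω => (A ω, W ω)) + entropy μ (fun ω => (B ω, W ω)) := by
  have e3 : entropy μ (fun ω => (A ω, B ω, W ω))
      = ∑ a, ∑ b, ∑ w, negMulLog (pr μ {ω | A ω = a ∧ B ω = b ∧ W ω = w}) := by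
    unfold entropy
    rw [Fintype.sum_prod_type]
    simp_rw [Fintype.sum_prod_type, Prod.mk.injEq]
  have eAW : entropy μ (fun ω => (A ω, W ω))
      = ∑ a, ∑ w, negMulLog (pr μ {ω | A ω = a ∧ W ω = w}) := by
    unfold entropy
    rw [Fintype.sum_prod_type]
    simp_rw [Prod.mk.injEq]
  have eBW : entropy μ (fun ω => (B ω, W ω))
      = ∑ b, ∑ w, negMulLog (pr μ {ω | B ω = b ∧ W ω = w}) := by
    unfold entropy
    rw [Fintype.sum_prod_type]
    simp_rw [Prod.mk.injEq]
  have hm1 : ∀ a w, pr μ {ω | A ω = a ∧ W ω = w}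
      = ∑ b, pr μ {ω | A ω = a ∧ B ω = b ∧ W ω = w} := by
    intro a w
    rw [pr_partition μ B hB {ω | A ω = a ∧ W ω = w} ((hA a).inter (hW w))]
    refine Finset.sum_congr rfl fun b _ => ?_
    congr 1
    ext ω
    simp only [Set.mem_inter_iff, Set.mem_setOf_eq]
    tauto
  have hm2 : ∀ b w, pr μ {ω | B ω = b ∧ W ω = w}
      = ∑ a, pr μ {ω | A ω = a ∧ B ω = b ∧ W ω = w} := by
    intro b w
    rw [pr_partition μ A hA {ω | B ω = b ∧ W ω = w} ((hB b).inter (hW w))]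
    refine Finset.sum_congr rfl fun a _ => ?_
    congr 1
    ext ω
    simp only [Set.mem_inter_iff, Set.mem_setOf_eq]
    tauto
  have hm3 : ∀ w, pr μ {ω | W ω = w} = ∑ b, pr μ {ω | B ω = b ∧ W ω = w} := by
    intro w
    rw [pr_partition μ B hB {ω | W ω = w} (hW w)]
    refine Finset.sum_congr rfl fun b _ => ?_
    congr 1
    ext ω
    simp only [Set.mem_inter_iff, Set.mem_setOf_eq]
    tauto
  rw [e3, eAW, eBW]
  exact cmi_zero_arith _ _ _ _ q hm1 hm2 hm3 hfac


lemma main_aux {α γ S M : Type*} [Fintype α] [Fintype γ] [Fintype S] [Fintype M] [Nonempty M]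
    (A : Ω → α) (X : Ω → γ) (V : Ω → S) (Y : Ω → M) (F : S → M)
    (hA : MeasFibers A) (hX : MeasFibers X) (hV : MeasFibers V)
    (hYF : ∀ ω, Y ω = F (V ω))
    (hci' : ∀ a x v, pr μ {ω | X ω = x ∧ V ω = v} ≠ 0 →
      condProb μ {ω | A ω = a} {ω | X ω = x ∧ V ω = v}
        = condProb μ {ω | A ω = a} {ω | X ω = x ∧ Y ω = F v}) :
    (entropy μ (fun ω => (A ω, X ω)) - entropy μ X)
      - (entropy μ (fun ω => (A ω, X ω, V ω)) - entropy μ (fun ω => (X ω, V ω)))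
      ≤ Real.log (Fintype.card M) := by
  have hYm : MeasFibers Y := by
    intro y
    have h : {ω | Y ω = y} = {ω | F (V ω) = y} := by
      ext ω; rw [Set.mem_setOf_eq, Set.mem_setOf_eq, hYF]
    rw [h]
    exact measFibers_comp hV F y
  -- conditional independence gives the factorization
  have hfac : ∀ (a : α) (v : S) (w : γ × M),
      pr μ {ω | A ω = a ∧ V ω = v ∧ (X ω, Y ω) = w}
        = condProb μ {ω | A ω = a} {ω | X ω = w.1 ∧ Y ω = w.2}
          * pr μ {ω | V ω = v ∧ (X ω, Y ω) = w} := by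
    rintro a v ⟨x, y⟩
    by_cases hFv : F v = y
    · have hset1 : {ω | A ω = a ∧ V ω = v ∧ (X ω, Y ω) = (x, y)}
          = {ω | A ω = a} ∩ {ω | X ω = x ∧ V ω = v} := by
        ext ω
        simp only [Set.mem_setOf_eq, Set.mem_inter_iff, Prod.mk.injEq]
        constructor
        · rintro ⟨h1, h2, h3, _⟩; exact ⟨h1, h3, h2⟩
        · rintro ⟨h1, h3, h2⟩
          exact ⟨h1, h2, h3, by rw [hYF, h2, hFv]⟩
      have hset2 : {ω | V ω = v ∧ (X ω, Y ω) = (x, y)} = {ω | X ω = x ∧ V ω = v} := by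
        ext ω
        simp only [Set.mem_setOf_eq, Prod.mk.injEq]
        constructor
        · rintro ⟨h2, h3, _⟩; exact ⟨h3, h2⟩
        · rintro ⟨h3, h2⟩; exact ⟨h2, h3, by rw [hYF, h2, hFv]⟩
      rw [hset1, hset2]
      by_cases hp : pr μ {ω | X ω = x ∧ V ω = v} = 0
      · rw [hp, mul_zero]
        refine le_antisymm ?_ (pr_nonneg μ _)
        exact hp ▸ pr_mono μ Set.inter_subset_right
      · have hc := hci' a x v hp
        rw [hFv] at hc
        rw [show ((x, y).1 : γ) = x from rfl, show ((x, y).2 : M) = y from rfl]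
        rw [← hc]
        unfold condProb
        rw [div_mul_cancel₀ _ hp]
    · have hset1 : {ω | A ω = a ∧ V ω = v ∧ (X ω, Y ω) = (x, y)} = (∅ : Set Ω) := by
        ext ω
        simp only [Set.mem_setOf_eq, Set.mem_empty_iff_false, iff_false]
        rintro ⟨_, h2, h3⟩
        have : F v = y := by rw [← h2, ← hYF]; exact congrArg Prod.snd h3
        exact hFv this
      have hset2 : {ω | V ω = v ∧ (X ω, Y ω) = (x, y)} = (∅ : Set Ω) := by
        ext ω
        simp only [Set.mem_setOf_eq, Set.mem_empty_iff_false, iff_false]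
        rintro ⟨h2, h3⟩
        have : F v = y := by rw [← h2, ← hYF]; exact congrArg Prod.snd h3
        exact hFv this
      rw [hset1, hset2, pr_empty, mul_zero]
  have hcmi : entropy μ (fun ω => (A ω, V ω, X ω, Y ω)) + entropy μ (fun ω => (X ω, Y ω))
      = entropy μ (fun ω => (A ω, X ω, Y ω)) + entropy μ (fun ω => (V ω, X ω, Y ω)) :=
    cmi_zero μ A V (fun ω => (X ω, Y ω)) hA hV (measFibers_pair hX hYm)
      (fun a w => condProb μ {ω | A ω = a} {ω | X ω = w.1 ∧ Y ω = w.2}) hfac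
  have h7 : entropy μ (fun ω => (A ω, X ω)) ≤ entropy μ (fun ω => (A ω, X ω, Y ω)) := by
    have h := entropy_le_pair μ (fun ω => (A ω, X ω)) Y (measFibers_pair hA hX) hYm
    have h2 : entropy μ (fun ω => ((A ω, X ω), Y ω)) = entropy μ (fun ω => (A ω, X ω, Y ω)) :=
      entropy_comp_inj μ (fun ω => (A ω, X ω, Y ω))
        (fun p : α × γ × M => ((p.1, p.2.1), p.2.2)) (by
          rintro ⟨a1, x1, y1⟩ ⟨a2, x2, y2⟩ hpp
          simp only [Prod.mk.injEq] at hpp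
          obtain ⟨⟨e1, e2⟩, e3⟩ := hpp
          simp [e1, e2, e3])
    exact h.trans h2.le
  have h8 : entropy μ (fun ω => (X ω, Y ω)) ≤ entropy μ X + Real.log (Fintype.card M) :=
    entropy_pair_le μ X Y hX hYm
  have hE1 : entropy μ (fun ω => (A ω, X ω, V ω)) = entropy μ (fun ω => (A ω, V ω, X ω, Y ω)) := by
    have hfun : (fun ω => (A ω, V ω, X ω, Y ω)) = (fun ω : Ω => (A ω, V ω, X ω, F (V ω))) :=
      funext fun ω => by rw [hYF]
    rw [hfun]
    exact (entropy_comp_inj μ (fun ω => (A ω, X ω, V ω))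
      (fun p : α × γ × S => (p.1, p.2.2, p.2.1, F p.2.2)) (by
        rintro ⟨a1, x1, v1⟩ ⟨a2, x2, v2⟩ hpp
        simp only [Prod.mk.injEq] at hpp
        obtain ⟨e1, e2, e3, _⟩ := hpp
        simp [e1, e2, e3])).symm
  have hE2 : entropy μ (fun ω => (X ω, V ω)) = entropy μ (fun ω => (V ω, X ω, Y ω)) := by
    have hfun : (fun ω => (V ω, X ω, Y ω)) = (fun ω : Ω => (V ω, X ω, F (V ω))) :=
      funext fun ω => by rw [hYF]
    rw [hfun]
    exact (entropy_comp_inj μ (fun ω => (X ω, V ω))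
      (fun p : γ × S => (p.2, p.1, F p.2)) (by
        rintro ⟨x1, v1⟩ ⟨x2, v2⟩ hpp
        simp only [Prod.mk.injEq] at hpp
        obtain ⟨e1, e2, _⟩ := hpp
        simp [e1, e2])).symm
  rw [hE1, hE2]
  linarith [hcmi, h7, h8]

end Lemmas

end MemoryLens

set_option maxHeartbeats 2000000 in
/-- Corollary. The summed memory lens quantities lower-bound the log of the
memory capacity: if `A_t` is conditionally independent of the history `Z_{1:t-1}` given
`(X_t, Y_{t-1})` for memory states generated by a memory function `g` with capacity `K`, then
`∑_{i=1}^{t-1} I(A_t; Z_i | X_t, Z_{i+1:t-1}) ≤ log K`. -/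
theorem memory_lens_corollary_sum_lower_bound
    {Ω α γ 𝒵 : Type*} [MeasurableSpace Ω]
    [Fintype α] [Fintype γ] [Fintype 𝒵]
    (μ : MeasureTheory.Measure Ω) [MeasureTheory.IsProbabilityMeasure μ]
    (H t : ℕ) (ht : t ≤ H) (ht1 : 1 ≤ t)
    (A : Ω → α) (X : Ω → γ) (Z : ℕ → Ω → 𝒵)
    (hA : MemoryLens.MeasFibers A) (hX : MemoryLens.MeasFibers X)
    (hZ : ∀ i, MemoryLens.MeasFibers (Z i))
    (K : ℕ) (hK : 0 < K) (g : ℕ → 𝒵 → Fin K → Fin K)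
    (hci : ∀ (a : α) (x : γ) (zs : Fin (t - 1) → 𝒵),
      μ {ω | X ω = x ∧ (fun j : Fin (t - 1) => Z (1 + (j : ℕ)) ω) = zs} ≠ 0 →
      MemoryLens.condProb μ {ω | A ω = a}
          {ω | X ω = x ∧ (fun j : Fin (t - 1) => Z (1 + (j : ℕ)) ω) = zs}
        = MemoryLens.condProb μ {ω | A ω = a}
          {ω | X ω = x ∧
            MemoryLens.memState g Z ⟨0, hK⟩ (t - 1) ω = MemoryLens.memFold g ⟨0, hK⟩ (t - 1) zs}) :
    ∑ i ∈ Finset.Icc 1 (t - 1),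
      MemoryLens.condMI μ A (Z i)
        (fun ω => (X ω, fun j : Fin (t - 1 - i) => Z (i + 1 + (j : ℕ)) ω))
      ≤ Real.log K := by
  classical
  set G : ℕ → ℝ := fun k =>
    MemoryLens.entropy μ (fun ω => (A ω, X ω, fun j : Fin k => Z (t - k + (j : ℕ)) ω))
      - MemoryLens.entropy μ (fun ω => (X ω, fun j : Fin k => Z (t - k + (j : ℕ)) ω)) with hG
  have hterm : ∀ i ∈ Finset.Icc 1 (t - 1),
      MemoryLens.condMI μ A (Z i)
        (fun ω => (X ω, fun j : Fin (t - 1 - i) => Z (i + 1 + (j : ℕ)) ω))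
      = G (t - 1 - i) - G (t - 1 - i + 1) := by
    intro i hi
    rw [Finset.mem_Icc] at hi
    obtain ⟨hi1, hi2⟩ := hi
    have harg : (fun ω => (X ω, fun j : Fin (t - 1 - i) => Z (i + 1 + (j : ℕ)) ω))
        = (fun ω : Ω => (X ω, fun j : Fin (t - 1 - i) => Z (t - (t - 1 - i) + (j : ℕ)) ω)) := by
      funext ω
      refine congrArg _ ?_
      funext j
      have h : i + 1 + (j : ℕ) = t - (t - 1 - i) + (j : ℕ) := by omega
      rw [h]
    rw [harg]
    have hcons : ∀ ω : Ω,
        (fun j : Fin (t - 1 - i + 1) => Z (t - (t - 1 - i + 1) + (j : ℕ)) ω)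
          = Fin.cons (Z i ω) (fun j : Fin (t - 1 - i) => Z (t - (t - 1 - i) + (j : ℕ)) ω) := by
      intro ω
      funext j
      refine Fin.cases ?_ ?_ j
      · rw [Fin.cons_zero]
        have h : t - (t - 1 - i + 1) + ((0 : Fin (t - 1 - i + 1)) : ℕ) = i := by
          simp only [Fin.val_zero]
          omega
        rw [h]
      · intro j'
        rw [Fin.cons_succ]
        have h : t - (t - 1 - i + 1) + ((j'.succ : Fin (t - 1 - i + 1)) : ℕ)
            = t - (t - 1 - i) + (j' : ℕ) := by
          simp only [Fin.val_succ]
          omega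
        rw [h]
    have hH2 : MemoryLens.entropy μ
          (fun ω => (Z i ω, X ω, fun j : Fin (t - 1 - i) => Z (t - (t - 1 - i) + (j : ℕ)) ω))
        = MemoryLens.entropy μ
          (fun ω => (X ω, fun j : Fin (t - 1 - i + 1) => Z (t - (t - 1 - i + 1) + (j : ℕ)) ω)) := by
      have h1 : (fun ω => (X ω, fun j : Fin (t - 1 - i + 1) => Z (t - (t - 1 - i + 1) + (j : ℕ)) ω))
          = (fun ω : Ω => (X ω,
              Fin.cons (Z i ω) (fun j : Fin (t - 1 - i) => Z (t - (t - 1 - i) + (j : ℕ)) ω))) :=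
        funext fun ω => by rw [hcons ω]
      rw [h1]
      exact (MemoryLens.entropy_comp_inj μ
        (fun ω => (Z i ω, X ω, fun j : Fin (t - 1 - i) => Z (t - (t - 1 - i) + (j : ℕ)) ω))
        (fun p : 𝒵 × γ × (Fin (t - 1 - i) → 𝒵) => (p.2.1, Fin.cons (α := fun _ => 𝒵) p.1 p.2.2)) (by
          rintro ⟨z1, x1, v1⟩ ⟨z2, x2, v2⟩ hpp
          simp only [Prod.mk.injEq] at hpp
          obtain ⟨e1, e2⟩ := hpp
          have ez : z1 = z2 := by
            have := congrFun e2 0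
            simpa using this
          have ev : v1 = v2 := by
            funext j
            have := congrFun e2 j.succ
            simpa using this
          simp [e1, ez, ev])).symm
    have hH3 : MemoryLens.entropy μ
          (fun ω => (A ω, Z i ω, X ω, fun j : Fin (t - 1 - i) => Z (t - (t - 1 - i) + (j : ℕ)) ω))
        = MemoryLens.entropy μ
          (fun ω => (A ω, X ω,
            fun j : Fin (t - 1 - i + 1) => Z (t - (t - 1 - i + 1) + (j : ℕ)) ω)) := by
      have h1 : (fun ω => (A ω, X ω,
            fun j : Fin (t - 1 - i + 1) => Z (t - (t - 1 - i + 1) + (j : ℕ)) ω))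
          = (fun ω : Ω => (A ω, X ω,
              Fin.cons (Z i ω) (fun j : Fin (t - 1 - i) => Z (t - (t - 1 - i) + (j : ℕ)) ω))) :=
        funext fun ω => by rw [hcons ω]
      rw [h1]
      exact (MemoryLens.entropy_comp_inj μ
        (fun ω => (A ω, Z i ω, X ω, fun j : Fin (t - 1 - i) => Z (t - (t - 1 - i) + (j : ℕ)) ω))
        (fun p : α × 𝒵 × γ × (Fin (t - 1 - i) → 𝒵) =>
          (p.1, p.2.2.1, Fin.cons (α := fun _ => 𝒵) p.2.1 p.2.2.2)) (by
          rintro ⟨a1, z1, x1, v1⟩ ⟨a2, z2, x2, v2⟩ hpp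
          simp only [Prod.mk.injEq] at hpp
          obtain ⟨e0, e1, e2⟩ := hpp
          have ez : z1 = z2 := by
            have := congrFun e2 0
            simpa using this
          have ev : v1 = v2 := by
            funext j
            have := congrFun e2 j.succ
            simpa using this
          simp [e0, e1, ez, ev])).symm
    simp only [MemoryLens.condMI]
    rw [hH2, hH3]
    simp only [hG]
    ring
  rw [Finset.sum_congr rfl hterm]
  have hre : ∑ i ∈ Finset.Icc 1 (t - 1), (G (t - 1 - i) - G (t - 1 - i + 1))
      = ∑ k ∈ Finset.range (t - 1), (G k - G (k + 1)) := by
    refine Finset.sum_nbij' (fun i => t - 1 - i) (fun k => t - 1 - k) ?_ ?_ ?_ ?_ ?_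
    · intro a ha
      rw [Finset.mem_Icc] at ha
      rw [Finset.mem_range]
      beta_reduce
      omega
    · intro a ha
      rw [Finset.mem_range] at ha
      rw [Finset.mem_Icc]
      beta_reduce
      omega
    · intro a ha
      rw [Finset.mem_Icc] at ha
      beta_reduce
      omega
    · intro a ha
      rw [Finset.mem_range] at ha
      beta_reduce
      omega
    · intro a _
      rfl
  rw [hre, Finset.sum_range_sub' G (t - 1)]
  -- G 0 = H(A,X) - H(X)
  have hG0 : G 0 = MemoryLens.entropy μ (fun ω => (A ω, X ω)) - MemoryLens.entropy μ X := by
    simp only [hG]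
    have e1 : MemoryLens.entropy μ
          (fun ω => (A ω, X ω, fun j : Fin 0 => Z (t - 0 + (j : ℕ)) ω))
        = MemoryLens.entropy μ (fun ω => (A ω, X ω)) := by
      have h1 : (fun ω => (A ω, X ω, fun j : Fin 0 => Z (t - 0 + (j : ℕ)) ω))
          = (fun ω : Ω => (A ω, X ω, fun j : Fin 0 => j.elim0)) := by
        funext ω
        refine congrArg _ (congrArg _ ?_)
        funext j
        exact j.elim0
      rw [h1]
      exact MemoryLens.entropy_comp_inj μ (fun ω => (A ω, X ω))
        (fun p : α × γ => (p.1, p.2, fun j : Fin 0 => j.elim0)) (by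
          rintro ⟨a1, x1⟩ ⟨a2, x2⟩ hpp
          simp only [Prod.mk.injEq] at hpp
          simp [hpp.1, hpp.2.1])
    have e2 : MemoryLens.entropy μ
          (fun ω => (X ω, fun j : Fin 0 => Z (t - 0 + (j : ℕ)) ω))
        = MemoryLens.entropy μ X := by
      have h1 : (fun ω => (X ω, fun j : Fin 0 => Z (t - 0 + (j : ℕ)) ω))
          = (fun ω : Ω => (X ω, fun j : Fin 0 => j.elim0)) := by
        funext ω
        refine congrArg _ ?_
        funext j
        exact j.elim0
      rw [h1]
      exact MemoryLens.entropy_comp_inj μ X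
        (fun x : γ => (x, fun j : Fin 0 => j.elim0)) (by
          intro x1 x2 hpp
          simp only [Prod.mk.injEq] at hpp
          exact hpp.1)
    rw [e1, e2]
  -- G (t-1) in terms of V
  have hGn : G (t - 1)
      = MemoryLens.entropy μ
          (fun ω => (A ω, X ω, fun j : Fin (t - 1) => Z (1 + (j : ℕ)) ω))
        - MemoryLens.entropy μ (fun ω => (X ω, fun j : Fin (t - 1) => Z (1 + (j : ℕ)) ω)) := by
    simp only [hG]
    have h1 : (fun ω : Ω => fun j : Fin (t - 1) => Z (t - (t - 1) + (j : ℕ)) ω)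
        = (fun ω : Ω => fun j : Fin (t - 1) => Z (1 + (j : ℕ)) ω) := by
      funext ω j
      have h : t - (t - 1) + (j : ℕ) = 1 + (j : ℕ) := by omega
      rw [h]
    have h2 : (fun ω => (A ω, X ω, fun j : Fin (t - 1) => Z (t - (t - 1) + (j : ℕ)) ω))
        = (fun ω : Ω => (A ω, X ω, fun j : Fin (t - 1) => Z (1 + (j : ℕ)) ω)) := by
      funext ω
      exact congrArg _ (congrArg _ (congrFun h1 ω))
    have h3 : (fun ω => (X ω, fun j : Fin (t - 1) => Z (t - (t - 1) + (j : ℕ)) ω))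
        = (fun ω : Ω => (X ω, fun j : Fin (t - 1) => Z (1 + (j : ℕ)) ω)) := by
      funext ω
      exact congrArg _ (congrFun h1 ω)
    rw [h2, h3]
  rw [hG0, hGn]
  -- apply the main bound
  have hV : MemoryLens.MeasFibers (fun ω : Ω => fun j : Fin (t - 1) => Z (1 + (j : ℕ)) ω) := by
    intro v
    have h : {ω : Ω | (fun j : Fin (t - 1) => Z (1 + (j : ℕ)) ω) = v}
        = ⋂ j : Fin (t - 1), {ω | Z (1 + (j : ℕ)) ω = v j} := by
      ext ω
      simp [funext_iff]
    show MeasurableSet {ω : Ω | (fun j : Fin (t - 1) => Z (1 + (j : ℕ)) ω) = v}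
    rw [h]
    exact MeasurableSet.iInter fun j => hZ _ _
  haveI : Nonempty (Fin K) := ⟨⟨0, hK⟩⟩
  have hmain := MemoryLens.main_aux μ A X
    (fun ω : Ω => fun j : Fin (t - 1) => Z (1 + (j : ℕ)) ω)
    (MemoryLens.memState g Z ⟨0, hK⟩ (t - 1))
    (MemoryLens.memFold g ⟨0, hK⟩ (t - 1))
    hA hX hV (fun ω => rfl)
    (fun a x v hp => hci a x v ((MemoryLens.pr_ne_zero_iff μ).mp hp))
  rw [Fintype.card_fin] at hmain
  exact hmain
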